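/- Let $R$ be a reduced root system in $\mathbb{R}^d$ with positive system $R_+$. Then the polynomial $\pi(x)=\prod_{\alpha\in R_+}\langle\alpha,x\rangle$ is harmonic: $\Delta\pi(x)=0$ for all $x\in\mathbb{R}^d$, where $\Delta=\sum_{i=1}^d\partial^2/\partial x_i^2$ is the Laplacian. -/

import Mathlib

open scoped RealInnerProductSpace

noncomputable def lapS {d : ℕ} [DecidableEq (EuclideanSpace ℝ (Fin d))]
    (Rp : Finset (EuclideanSpace ℝ (Fin d))) (x : EuclideanSpace ℝ (Fin d)) : ℝ :=
  ∑ a ∈ Rp, ∑ b ∈ Rp.erase a, ⟪a, b⟫ * ∏ γ ∈ (Rp.erase a).erase b, ⟪γ, x⟫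

theorem lapl_eq {d : ℕ} [DecidableEq (EuclideanSpace ℝ (Fin d))]
    (Rp : Finset (EuclideanSpace ℝ (Fin d))) (x : EuclideanSpace ℝ (Fin d)) :
    ∑ i : Fin d,
      fderiv ℝ (fun y : EuclideanSpace ℝ (Fin d) =>
          fderiv ℝ (fun z : EuclideanSpace ℝ (Fin d) => ∏ α ∈ Rp, ⟪α, z⟫) y
            (EuclideanSpace.single i 1)) x (EuclideanSpace.single i 1) = lapS Rp x := by
  have h1 : ∀ y : EuclideanSpace ℝ (Fin d),
      HasFDerivAt (fun z : EuclideanSpace ℝ (Fin d) => ∏ α ∈ Rp, ⟪α, z⟫)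
        (∑ a ∈ Rp, (∏ b ∈ Rp.erase a, ⟪b, y⟫) • (innerSL ℝ a)) y := by
    intro y
    exact HasFDerivAt.finset_prod (fun a _ => (innerSL ℝ a).hasFDerivAt)
  have h3 : ∀ i : Fin d, (fun y : EuclideanSpace ℝ (Fin d) =>
      fderiv ℝ (fun z : EuclideanSpace ℝ (Fin d) => ∏ α ∈ Rp, ⟪α, z⟫) y
        (EuclideanSpace.single i 1))
      = fun y => ∑ a ∈ Rp, (∏ b ∈ Rp.erase a, ⟪b, y⟫) * ⟪a, EuclideanSpace.single i 1⟫ := by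
    intro i
    funext y
    rw [(h1 y).fderiv]
    simp
  have h4 : ∀ i : Fin d, HasFDerivAt
      (fun y : EuclideanSpace ℝ (Fin d) =>
        ∑ a ∈ Rp, (∏ b ∈ Rp.erase a, ⟪b, y⟫) * ⟪a, EuclideanSpace.single i 1⟫)
      (∑ a ∈ Rp, ⟪a, (EuclideanSpace.single i 1 : EuclideanSpace ℝ (Fin d))⟫ •
        (∑ b ∈ Rp.erase a, (∏ c ∈ (Rp.erase a).erase b, ⟪c, x⟫) • (innerSL ℝ b))) x := by
    intro i
    exact HasFDerivAt.fun_sum (fun a _ =>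
      (HasFDerivAt.finset_prod (fun b _ => (innerSL ℝ b).hasFDerivAt)).mul_const _)
  have h5 : ∀ i : Fin d,
      fderiv ℝ (fun y : EuclideanSpace ℝ (Fin d) =>
          fderiv ℝ (fun z : EuclideanSpace ℝ (Fin d) => ∏ α ∈ Rp, ⟪α, z⟫) y
            (EuclideanSpace.single i 1)) x (EuclideanSpace.single i 1)
      = ∑ a ∈ Rp, ⟪a, (EuclideanSpace.single i 1 : EuclideanSpace ℝ (Fin d))⟫ *
          ∑ b ∈ Rp.erase a, (∏ c ∈ (Rp.erase a).erase b, ⟪c, x⟫) *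
            ⟪b, (EuclideanSpace.single i 1 : EuclideanSpace ℝ (Fin d))⟫ := by
    intro i
    rw [h3 i, (h4 i).fderiv]
    simp [smul_eq_mul, mul_comm]
  calc ∑ i : Fin d,
      fderiv ℝ (fun y : EuclideanSpace ℝ (Fin d) =>
          fderiv ℝ (fun z : EuclideanSpace ℝ (Fin d) => ∏ α ∈ Rp, ⟪α, z⟫) y
            (EuclideanSpace.single i 1)) x (EuclideanSpace.single i 1)
      = ∑ i : Fin d, ∑ a ∈ Rp, ⟪a, (EuclideanSpace.single i 1 : EuclideanSpace ℝ (Fin d))⟫ *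
          ∑ b ∈ Rp.erase a, (∏ c ∈ (Rp.erase a).erase b, ⟪c, x⟫) *
            ⟪b, (EuclideanSpace.single i 1 : EuclideanSpace ℝ (Fin d))⟫ :=
        Finset.sum_congr rfl fun i _ => h5 i
    _ = lapS Rp x := by
        rw [Finset.sum_comm]
        unfold lapS
        refine Finset.sum_congr rfl fun a _ => ?_
        simp_rw [Finset.mul_sum]
        rw [Finset.sum_comm]
        refine Finset.sum_congr rfl fun b hb => ?_
        have hab : ⟪a, b⟫ = ∑ i : Fin d, a i * b i := by
          rw [PiLp.inner_apply]; simp [RCLike.inner_apply]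
          exact Finset.sum_congr rfl fun _ _ => mul_comm _ _
        rw [hab, Finset.sum_mul]
        refine Finset.sum_congr rfl fun i _ => ?_
        simp [EuclideanSpace.inner_single_right]
        ring



theorem lapS_reindex {d : ℕ} [DecidableEq (EuclideanSpace ℝ (Fin d))]
    (Rp : Finset (EuclideanSpace ℝ (Fin d))) (x x' : EuclideanSpace ℝ (Fin d))
    (τ : EuclideanSpace ℝ (Fin d) → EuclideanSpace ℝ (Fin d))
    (s : EuclideanSpace ℝ (Fin d) → ℝ)
    (hs : ∀ γ ∈ Rp, s γ = 1 ∨ s γ = -1)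
    (hτmem : ∀ γ ∈ Rp, τ γ ∈ Rp)
    (hττ : ∀ γ ∈ Rp, τ (τ γ) = γ)
    (hinner : ∀ a ∈ Rp, ∀ b ∈ Rp, ⟪a, b⟫ = s a * s b * ⟪τ a, τ b⟫)
    (hx : ∀ γ ∈ Rp, ⟪γ, x'⟫ = s γ * ⟪τ γ, x⟫)
    (hsign : ∏ γ ∈ Rp, s γ = -1) :
    lapS Rp x' = - lapS Rp x := by
  have hτerr : ∀ a ∈ Rp, ∀ b, b ∈ Rp.erase a → τ b ∈ Rp.erase (τ a) := by
    intro a ha b hb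
    have hb' := Finset.mem_of_mem_erase hb
    refine Finset.mem_erase.2 ⟨fun h => (Finset.ne_of_mem_erase hb) ?_, hτmem b hb'⟩
    have := congrArg τ h
    rwa [hττ b hb', hττ a ha] at this
  have hterm : ∀ a ∈ Rp, ∀ b ∈ Rp.erase a,
      ⟪a, b⟫ * ∏ γ ∈ (Rp.erase a).erase b, ⟪γ, x'⟫
        = -(⟪τ a, τ b⟫ * ∏ γ ∈ (Rp.erase (τ a)).erase (τ b), ⟪γ, x⟫) := by
    intro a ha b hb
    have hb' : b ∈ Rp := Finset.mem_of_mem_erase hb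
    have hTsub : ∀ γ ∈ (Rp.erase a).erase b, γ ∈ Rp := fun γ hγ =>
      Finset.mem_of_mem_erase (Finset.mem_of_mem_erase hγ)
    have h1 : ∏ γ ∈ (Rp.erase a).erase b, ⟪γ, x'⟫
        = (∏ γ ∈ (Rp.erase a).erase b, s γ) * ∏ γ ∈ (Rp.erase a).erase b, ⟪τ γ, x⟫ := by
      rw [← Finset.prod_mul_distrib]
      exact Finset.prod_congr rfl fun γ hγ => hx γ (hTsub γ hγ)
    have h2 : ∏ γ ∈ (Rp.erase a).erase b, ⟪τ γ, x⟫
        = ∏ γ ∈ (Rp.erase (τ a)).erase (τ b), ⟪γ, x⟫ := by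
      refine Finset.prod_nbij' τ τ ?_ ?_ ?_ ?_ ?_
      · intro γ hγ
        have hγa : γ ∈ Rp.erase a := Finset.mem_of_mem_erase hγ
        refine Finset.mem_erase.2 ⟨fun h => (Finset.ne_of_mem_erase hγ) ?_, hτerr a ha γ hγa⟩
        have := congrArg τ h
        rwa [hττ γ (hTsub γ hγ), hττ b hb'] at this
      · intro γ hγ
        have hγ1 : γ ∈ Rp.erase (τ a) := Finset.mem_of_mem_erase hγ
        have hγRp : γ ∈ Rp := Finset.mem_of_mem_erase hγ1
        refine Finset.mem_erase.2 ⟨?_, Finset.mem_erase.2 ⟨?_, hτmem γ hγRp⟩⟩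
        · intro h
          exact (Finset.ne_of_mem_erase hγ) (by rw [← hττ γ hγRp, h])
        · intro h
          exact (Finset.ne_of_mem_erase hγ1) (by rw [← hττ γ hγRp, h])
      · exact fun γ hγ => hττ γ (hTsub γ hγ)
      · exact fun γ hγ => hττ γ (Finset.mem_of_mem_erase (Finset.mem_of_mem_erase hγ))
      · exact fun γ hγ => rfl
    have hsab : s a * (s b * ∏ γ ∈ (Rp.erase a).erase b, s γ) = -1 := by
      rw [Finset.mul_prod_erase (Rp.erase a) s hb, Finset.mul_prod_erase Rp s ha, hsign]
    have h3 : ∏ γ ∈ (Rp.erase a).erase b, s γ = -(s a * s b) := by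
      rcases hs a ha with h | h <;> rcases hs b hb' with h' | h' <;>
        rw [h, h'] at hsab ⊢ <;> linarith
    have h4 : ⟪a, b⟫ = s a * s b * ⟪τ a, τ b⟫ := hinner a ha b hb'
    have hss : s a * s b * (s a * s b) = 1 := by
      rcases hs a ha with h | h <;> rcases hs b hb' with h' | h' <;> rw [h, h'] <;> ring
    rw [h1, h2, h3, h4]
    rcases hs a ha with h | h <;> rcases hs b hb' with h' | h' <;> rw [h, h'] <;> ring
  calc lapS Rp x'
      = ∑ a ∈ Rp, ∑ b ∈ Rp.erase a,
          -(⟪τ a, τ b⟫ * ∏ γ ∈ (Rp.erase (τ a)).erase (τ b), ⟪γ, x⟫) := by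
        unfold lapS
        exact Finset.sum_congr rfl fun a ha => Finset.sum_congr rfl fun b hb => hterm a ha b hb
    _ = ∑ a ∈ Rp, ∑ b ∈ Rp.erase (τ a),
          -(⟪τ a, b⟫ * ∏ γ ∈ (Rp.erase (τ a)).erase b, ⟪γ, x⟫) := by
        refine Finset.sum_congr rfl fun a ha => ?_
        refine Finset.sum_nbij' τ τ (fun b hb => hτerr a ha b hb) ?_ ?_ ?_ ?_
        · intro b hb
          have hbRp : b ∈ Rp := Finset.mem_of_mem_erase hb
          refine Finset.mem_erase.2 ⟨fun h => (Finset.ne_of_mem_erase hb) ?_, hτmem b hbRp⟩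
          rw [← hττ b hbRp, h]
        · exact fun b hb => hττ b (Finset.mem_of_mem_erase hb)
        · exact fun b hb => hττ b (Finset.mem_of_mem_erase hb)
        · exact fun b hb => rfl
    _ = ∑ a ∈ Rp, ∑ b ∈ Rp.erase a, -(⟪a, b⟫ * ∏ γ ∈ (Rp.erase a).erase b, ⟪γ, x⟫) := by
        refine Finset.sum_nbij' τ τ hτmem hτmem hττ hττ (fun a ha => rfl)
    _ = - lapS Rp x := by
        unfold lapS
        rw [← Finset.sum_neg_distrib]
        exact Finset.sum_congr rfl fun a _ => by rw [← Finset.sum_neg_distrib]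



theorem lapS_hyperplane {d : ℕ} [DecidableEq (EuclideanSpace ℝ (Fin d))]
    (R Rp : Finset (EuclideanSpace ℝ (Fin d)))
    (hR0 : ∀ α ∈ R, α ≠ 0)
    (hR1 : ∀ α ∈ R, ∀ c : ℝ, c • α ∈ R → c = 1 ∨ c = -1)
    (hR2 : ∀ α ∈ R, ∀ y ∈ R, y - (2 * ⟪α, y⟫ / ‖α‖ ^ 2) • α ∈ R)
    (hsplit : ∀ α : EuclideanSpace ℝ (Fin d), α ∈ R ↔ (α ∈ Rp ∨ -α ∈ Rp))
    (hdisj : ∀ α ∈ Rp, -α ∉ Rp)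
    (α : EuclideanSpace ℝ (Fin d)) (hα : α ∈ Rp)
    (y : EuclideanSpace ℝ (Fin d)) (hy : ⟪α, y⟫ = 0) :
    ∃ (τ : EuclideanSpace ℝ (Fin d) → EuclideanSpace ℝ (Fin d))
      (s : EuclideanSpace ℝ (Fin d) → ℝ),
      (∀ γ ∈ Rp, s γ = 1 ∨ s γ = -1) ∧ (∀ γ ∈ Rp, τ γ ∈ Rp) ∧ (∀ γ ∈ Rp, τ (τ γ) = γ) ∧
      (∀ a ∈ Rp, ∀ b ∈ Rp, ⟪a, b⟫ = s a * s b * ⟪τ a, τ b⟫) ∧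
      (∀ γ ∈ Rp, ⟪γ, y⟫ = s γ * ⟪τ γ, y⟫) ∧ (∏ γ ∈ Rp, s γ = -1) := by
  have hαR : α ∈ R := (hsplit α).2 (Or.inl hα)
  have hα0 : α ≠ 0 := hR0 α hαR
  have hn : ‖α‖ ^ 2 ≠ 0 := pow_ne_zero 2 (norm_ne_zero_iff.2 hα0)
  set σ : EuclideanSpace ℝ (Fin d) → EuclideanSpace ℝ (Fin d) :=
    fun u => u - (2 * ⟪α, u⟫ / ‖α‖ ^ 2) • α with hσdef
  have hσα : ∀ u, ⟪α, σ u⟫ = -⟪α, u⟫ := by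
    intro u
    simp only [hσdef, inner_sub_right, real_inner_smul_right, real_inner_self_eq_norm_sq]
    field_simp
    ring
  have hσσ : ∀ u, σ (σ u) = u := by
    intro u
    have h1 : σ (σ u) = σ u - (2 * ⟪α, σ u⟫ / ‖α‖ ^ 2) • α := rfl
    rw [h1, hσα]
    have h2 : 2 * -⟪α, u⟫ / ‖α‖ ^ 2 = -(2 * ⟪α, u⟫ / ‖α‖ ^ 2) := by ring
    rw [h2, neg_smul, sub_neg_eq_add]
    simp only [hσdef]
    abel
  have hσadj : ∀ u v, ⟪σ u, v⟫ = ⟪u, σ v⟫ := by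
    intro u v
    simp only [hσdef, inner_sub_left, inner_sub_right, real_inner_smul_left,
      real_inner_smul_right]
    rw [real_inner_comm u α]
    ring
  have hσinner : ∀ u v, ⟪σ u, σ v⟫ = ⟪u, v⟫ := by
    intro u v
    rw [hσadj, hσσ]
  have hσneg : ∀ u, σ (-u) = -σ u := by
    intro u
    simp only [hσdef, inner_neg_right]
    module
  have hσAα : σ α = -α := by
    have h1 : σ α = α - (2 * ⟪α, α⟫ / ‖α‖ ^ 2) • α := rfl
    have h2 : 2 * ⟪α, α⟫ / ‖α‖ ^ 2 = 2 := by
      rw [real_inner_self_eq_norm_sq]; field_simp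
    rw [h1, h2, two_smul]
    abel
  have memR : ∀ γ ∈ Rp, γ ∈ R := fun γ hγ => (hsplit γ).2 (Or.inl hγ)
  have hσR : ∀ γ ∈ R, σ γ ∈ R := fun γ hγ => hR2 α hαR γ hγ
  set s : EuclideanSpace ℝ (Fin d) → ℝ := fun γ => if σ γ ∈ Rp then 1 else -1 with hsdef
  set τ : EuclideanSpace ℝ (Fin d) → EuclideanSpace ℝ (Fin d) :=
    fun γ => if σ γ ∈ Rp then σ γ else -σ γ with hτdef
  have hs : ∀ γ ∈ Rp, s γ = 1 ∨ s γ = -1 := by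
    intro γ _
    by_cases h : σ γ ∈ Rp
    · exact Or.inl (by simp [hsdef, h])
    · exact Or.inr (by simp [hsdef, h])
  have hστ : ∀ γ, σ γ = s γ • τ γ := by
    intro γ
    by_cases h : σ γ ∈ Rp <;> simp [hsdef, hτdef, h]
  have hτmem : ∀ γ ∈ Rp, τ γ ∈ Rp := by
    intro γ hγ
    rcases (hsplit (σ γ)).1 (hσR γ (memR γ hγ)) with h | h
    · simpa [hτdef, h] using h
    · by_cases h' : σ γ ∈ Rp
      · simpa [hτdef, h'] using h'
      · simpa [hτdef, h'] using h
  have hττ : ∀ γ ∈ Rp, τ (τ γ) = γ := by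
    intro γ hγ
    by_cases h : σ γ ∈ Rp
    · have h1 : τ γ = σ γ := by simp [hτdef, h]
      have h2 : σ (τ γ) = γ := by rw [h1, hσσ]
      rw [show τ (τ γ) = if σ (τ γ) ∈ Rp then σ (τ γ) else -σ (τ γ) from rfl, h2]
      simp [hγ]
    · have h1 : τ γ = -σ γ := by simp [hτdef, h]
      have h2 : σ (τ γ) = -γ := by rw [h1, hσneg, hσσ]
      rw [show τ (τ γ) = if σ (τ γ) ∈ Rp then σ (τ γ) else -σ (τ γ) from rfl, h2]
      simp [hdisj γ hγ]
  have hinner : ∀ a ∈ Rp, ∀ b ∈ Rp, ⟪a, b⟫ = s a * s b * ⟪τ a, τ b⟫ := by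
    intro a _ b _
    rw [← hσinner a b, hστ a, hστ b, real_inner_smul_left, real_inner_smul_right]
    ring
  have hσy : σ y = y := by
    rw [hσdef]
    simp [hy]
  have hx : ∀ γ ∈ Rp, ⟪γ, y⟫ = s γ * ⟪τ γ, y⟫ := by
    intro γ _
    conv_lhs => rw [← hσy]
    rw [← hσadj, hστ γ, real_inner_smul_left]
  have hsα : s α = -1 := by
    have : σ α ∉ Rp := by rw [hσAα]; exact hdisj α hα
    simp [hsdef, this]
  have hτα : τ α = α := by
    have h' : σ α ∉ Rp := by rw [hσAα]; exact hdisj α hα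
    have h1 : τ α = -σ α := by simp [hτdef, h']
    rw [h1, hσAα, neg_neg]
  have hsτ : ∀ γ ∈ Rp, s (τ γ) = s γ := by
    intro γ hγ
    by_cases h : σ γ ∈ Rp
    · have h1 : τ γ = σ γ := by simp [hτdef, h]
      have h2 : σ (τ γ) = γ := by rw [h1, hσσ]
      simp [hsdef, h2, hγ, h]
    · have h1 : τ γ = -σ γ := by simp [hτdef, h]
      have h2 : σ (τ γ) = -γ := by rw [h1, hσneg, hσσ]
      simp [hsdef, h2, hdisj γ hγ, h]
  have hsign : ∏ γ ∈ Rp, s γ = -1 := by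
    rw [← Finset.mul_prod_erase Rp s hα, hsα]
    have hprod : ∏ γ ∈ Rp.erase α, s γ = 1 := by
      refine Finset.prod_involution (fun γ _ => τ γ) ?_ ?_ ?_ ?_
      · intro γ hγ
        have hγRp : γ ∈ Rp := Finset.mem_of_mem_erase hγ
        rw [hsτ γ hγRp]
        rcases hs γ hγRp with h | h <;> rw [h] <;> norm_num
      · intro γ hγ hsγ
        have hγRp : γ ∈ Rp := Finset.mem_of_mem_erase hγ
        have h : σ γ ∉ Rp := by
          intro h'
          exact hsγ (by simp [hsdef, h'])
        have h1 : τ γ = -σ γ := by simp [hτdef, h]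
        intro heq
        replace heq : τ γ = γ := heq
        rw [h1] at heq
        have hσγ : γ - (2 * ⟪α, γ⟫ / ‖α‖ ^ 2) • α = -γ := neg_eq_iff_eq_neg.mp heq
        have h2 : (2:ℝ) • γ = (2 * ⟪α, γ⟫ / ‖α‖ ^ 2) • α := by
          linear_combination (norm := module) hσγ
        have hγeq : γ = (⟪α, γ⟫ / ‖α‖ ^ 2) • α := by
          calc γ = ((1:ℝ)/2) • ((2:ℝ) • γ) := by rw [smul_smul]; norm_num
            _ = ((1:ℝ)/2) • ((2 * ⟪α, γ⟫ / ‖α‖ ^ 2) • α) := by rw [h2]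
            _ = (⟪α, γ⟫ / ‖α‖ ^ 2) • α := by rw [smul_smul]; congr 1; ring
        rcases hR1 α hαR (⟪α, γ⟫ / ‖α‖ ^ 2) (by rw [← hγeq]; exact memR γ hγRp) with hc | hc
        · rw [hc, one_smul] at hγeq
          exact (Finset.ne_of_mem_erase hγ) hγeq
        · rw [hc, neg_smul, one_smul] at hγeq
          have : -α ∈ Rp := by rw [← hγeq]; exact hγRp
          exact hdisj α hα this
      · intro γ hγ
        have hγRp : γ ∈ Rp := Finset.mem_of_mem_erase hγ
        refine Finset.mem_erase.2 ⟨?_, hτmem γ hγRp⟩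
        intro heq
        have := congrArg τ heq
        rw [hττ γ hγRp, hτα] at this
        exact (Finset.ne_of_mem_erase hγ) this
      · intro γ hγ
        exact hττ γ (Finset.mem_of_mem_erase hγ)
    rw [hprod]
    norm_num
  exact ⟨τ, s, hs, hτmem, hττ, hinner, hx, hsign⟩

theorem dense_inner_ne {d : ℕ} (w : EuclideanSpace ℝ (Fin d)) (hw : w ≠ 0) :
    Dense {x : EuclideanSpace ℝ (Fin d) | ⟪w, x⟫ ≠ 0} := by
  rw [Metric.dense_iff]
  intro x r hr
  by_cases hx : ⟪w, x⟫ ≠ 0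
  · exact ⟨x, Metric.mem_ball_self hr, hx⟩
  push_neg at hx
  have hwn : 0 < ‖w‖ := norm_pos_iff.2 hw
  refine ⟨x + (r / (2 * ‖w‖)) • w, ?_, ?_⟩
  · rw [Metric.mem_ball, dist_eq_norm, add_sub_cancel_left, norm_smul, Real.norm_eq_abs,
      abs_of_pos (by positivity)]
    have h1 : r / (2 * ‖w‖) * ‖w‖ = r / 2 := by field_simp
    rw [h1]
    linarith
  · show ⟪w, x + (r / (2 * ‖w‖)) • w⟫ ≠ 0
    rw [inner_add_right, hx, zero_add, real_inner_smul_right, real_inner_self_eq_norm_sq]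
    have : 0 < r / (2 * ‖w‖) * ‖w‖ ^ 2 := by positivity
    exact ne_of_gt this

theorem lapS_zero_of_distinct {d : ℕ} [DecidableEq (EuclideanSpace ℝ (Fin d))]
    (Rp : Finset (EuclideanSpace ℝ (Fin d))) (β x : EuclideanSpace ℝ (Fin d))
    (hβpos : ∀ γ ∈ Rp, 0 < ⟪γ, β⟫)
    (hzero : ∀ y : EuclideanSpace ℝ (Fin d), (∃ α ∈ Rp, ⟪α, y⟫ = 0) → lapS Rp y = 0)
    (hdist : ∀ a ∈ Rp, ∀ b ∈ Rp, a ≠ b → -⟪a, x⟫ / ⟪a, β⟫ ≠ -⟪b, x⟫ / ⟪b, β⟫) :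
    lapS Rp x = 0 := by
  rcases Rp.eq_empty_or_nonempty with h | hne
  · simp [lapS, h]
  set t : EuclideanSpace ℝ (Fin d) → ℝ := fun γ => -⟪γ, x⟫ / ⟪γ, β⟫ with htdef
  set G : Polynomial ℝ := ∑ a ∈ Rp, ∑ b ∈ Rp.erase a, Polynomial.C ⟪a, b⟫ *
      ∏ γ ∈ (Rp.erase a).erase b,
        (Polynomial.C ⟪γ, x⟫ + Polynomial.C ⟪γ, β⟫ * Polynomial.X) with hGdef
  have hGeval : ∀ r : ℝ, G.eval r = lapS Rp (x + r • β) := by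
    intro r
    rw [hGdef]
    unfold lapS
    rw [Polynomial.eval_finset_sum]
    refine Finset.sum_congr rfl fun a _ => ?_
    rw [Polynomial.eval_finset_sum]
    refine Finset.sum_congr rfl fun b _ => ?_
    rw [Polynomial.eval_mul, Polynomial.eval_C, Polynomial.eval_prod]
    congr 1
    refine Finset.prod_congr rfl fun γ _ => ?_
    rw [inner_add_right, real_inner_smul_right, Polynomial.eval_add, Polynomial.eval_C,
      Polynomial.eval_mul, Polynomial.eval_C, Polynomial.eval_X]
    ring
  have hcard : ∀ a ∈ Rp, ∀ b ∈ Rp.erase a, ((Rp.erase a).erase b).card = Rp.card - 2 := by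
    intro a ha b hb
    rw [Finset.card_erase_of_mem hb, Finset.card_erase_of_mem ha]
    omega
  have hdeg : G.natDegree ≤ Rp.card - 2 := by
    rw [hGdef]
    refine Polynomial.natDegree_sum_le_of_forall_le _ _ fun a ha => ?_
    refine Polynomial.natDegree_sum_le_of_forall_le _ _ fun b hb => ?_
    refine le_trans (Polynomial.natDegree_mul_le) ?_
    rw [Polynomial.natDegree_C, zero_add]
    refine le_trans (Polynomial.natDegree_prod_le _ _) ?_
    refine le_trans (Finset.sum_le_card_nsmul _ _ 1 fun γ _ => ?_) ?_
    · rw [add_comm]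
      exact Polynomial.natDegree_linear_le
    · rw [smul_eq_mul, mul_one, hcard a ha b hb]
  have htinj : ∀ a ∈ Rp, ∀ b ∈ Rp, t a = t b → a = b := by
    intro a ha b hb hab
    by_contra hne'
    exact hdist a ha b hb hne' hab
  have hcardim : (Rp.image t).card = Rp.card :=
    Finset.card_image_of_injOn fun a ha b hb hab => htinj a ha b hb hab
  have hroot : ∀ r ∈ Rp.image t, G.eval r = 0 := by
    intro r hr
    rcases Finset.mem_image.1 hr with ⟨γ, hγ, rfl⟩
    rw [hGeval]
    refine hzero _ ⟨γ, hγ, ?_⟩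
    rw [inner_add_right, real_inner_smul_right]
    have hb : ⟪γ, β⟫ ≠ 0 := ne_of_gt (hβpos γ hγ)
    have ht : t γ = -⟪γ, x⟫ / ⟪γ, β⟫ := rfl
    rw [ht, div_mul_cancel₀ _ hb]
    ring
  have hG0 : G = 0 := by
    refine Polynomial.eq_zero_of_natDegree_lt_card_of_eval_eq_zero' G (Rp.image t) hroot ?_
    rw [hcardim]
    exact lt_of_le_of_lt hdeg (Nat.sub_lt (Finset.card_pos.2 hne) two_pos)
  have := hGeval 0
  rw [hG0] at this
  simpa using this.symm

theorem stmt_10 {d : ℕ} (R Rp : Finset (EuclideanSpace ℝ (Fin d)))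
    -- `R` is a reduced root system:
    (hR0 : ∀ α ∈ R, α ≠ 0)
    (hR1 : ∀ α ∈ R, ∀ c : ℝ, c • α ∈ R → c = 1 ∨ c = -1)
    (hR1' : ∀ α ∈ R, -α ∈ R)
    (hR2 : ∀ α ∈ R, ∀ y ∈ R, y - (2 * ⟪α, y⟫ / ‖α‖ ^ 2) • α ∈ R)
    -- `Rp` is a positive system: `R = Rp ⊔ (-Rp)` separated by a hyperplane
    (hsplit : ∀ α : EuclideanSpace ℝ (Fin d), α ∈ R ↔ (α ∈ Rp ∨ -α ∈ Rp))
    (hdisj : ∀ α ∈ Rp, -α ∉ Rp)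
    (hβ : ∃ β : EuclideanSpace ℝ (Fin d), β ∉ R ∧ ∀ α ∈ Rp, 0 < ⟪β, α⟫) :
    -- the polynomial `π(x) = ∏_{α ∈ Rp} ⟨α, x⟩` is `Δ`-harmonic
    ∀ x : EuclideanSpace ℝ (Fin d),
      ∑ i : Fin d,
        fderiv ℝ (fun y : EuclideanSpace ℝ (Fin d) =>
            fderiv ℝ (fun z : EuclideanSpace ℝ (Fin d) => ∏ α ∈ Rp, ⟪α, z⟫) y
              (EuclideanSpace.single i 1)) x (EuclideanSpace.single i 1) = 0 := by
  classical
  obtain ⟨β, hβR, hβpos⟩ := hβ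
  have hβpos' : ∀ γ ∈ Rp, 0 < ⟪γ, β⟫ := fun γ hγ => by
    rw [real_inner_comm]; exact hβpos γ hγ
  have memR : ∀ γ ∈ Rp, γ ∈ R := fun γ hγ => (hsplit γ).2 (Or.inl hγ)
  have hzero : ∀ y : EuclideanSpace ℝ (Fin d),
      (∃ α ∈ Rp, ⟪α, y⟫ = 0) → lapS Rp y = 0 := by
    rintro y ⟨α, hα, hy⟩
    obtain ⟨τ, s, hs, hτmem, hττ, hinner, hx, hsign⟩ :=
      lapS_hyperplane R Rp hR0 hR1 hR2 hsplit hdisj α hα y hy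
    have := lapS_reindex Rp y y τ s hs hτmem hττ hinner hx hsign
    linarith
  set P : Finset (EuclideanSpace ℝ (Fin d) × EuclideanSpace ℝ (Fin d)) :=
    (Rp ×ˢ Rp).filter (fun p => p.1 ≠ p.2) with hPdef
  set f : EuclideanSpace ℝ (Fin d) × EuclideanSpace ℝ (Fin d) →
      Set (EuclideanSpace ℝ (Fin d)) :=
    fun p => {x | ⟪⟪p.2, β⟫ • p.1 - ⟪p.1, β⟫ • p.2, x⟫ ≠ 0} with hfdef
  have hPmem : ∀ p ∈ P, p.1 ∈ Rp ∧ p.2 ∈ Rp ∧ p.1 ≠ p.2 := by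
    intro p hp
    rcases Finset.mem_filter.1 hp with ⟨hp1, hp2⟩
    rcases Finset.mem_product.1 hp1 with ⟨h1, h2⟩
    exact ⟨h1, h2, hp2⟩
  have hU : Dense (⋂ p ∈ (P : Set (EuclideanSpace ℝ (Fin d) × EuclideanSpace ℝ (Fin d))), f p) := by
    refine dense_biInter_of_isOpen ?_ P.countable_toSet ?_
    · intro p _
      have hg : Continuous fun x : EuclideanSpace ℝ (Fin d) =>
          ⟪⟪p.2, β⟫ • p.1 - ⟪p.1, β⟫ • p.2, x⟫ :=
        Continuous.inner continuous_const continuous_id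
      exact isOpen_ne.preimage hg
    · intro p hp
      obtain ⟨h1, h2, hne⟩ := hPmem p hp
      refine dense_inner_ne _ ?_
      intro hw0
      have h2' : ⟪p.2, β⟫ ≠ 0 := ne_of_gt (hβpos' p.2 h2)
      have heq : ⟪p.2, β⟫ • p.1 = ⟪p.1, β⟫ • p.2 := sub_eq_zero.mp hw0
      have hp1eq : p.1 = (⟪p.1, β⟫ / ⟪p.2, β⟫) • p.2 := by
        calc p.1 = (⟪p.2, β⟫)⁻¹ • (⟪p.2, β⟫ • p.1) := by
              rw [smul_smul, inv_mul_cancel₀ h2', one_smul]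
          _ = (⟪p.2, β⟫)⁻¹ • (⟪p.1, β⟫ • p.2) := by rw [heq]
          _ = (⟪p.1, β⟫ / ⟪p.2, β⟫) • p.2 := by
              rw [smul_smul, ← div_eq_inv_mul]
      rcases hR1 p.2 (memR p.2 h2) (⟪p.1, β⟫ / ⟪p.2, β⟫)
          (by rw [← hp1eq]; exact memR p.1 h1) with hc | hc
      · rw [hc, one_smul] at hp1eq
        exact hne hp1eq
      · rw [hc, neg_smul, one_smul] at hp1eq
        have : -p.2 ∈ Rp := by rw [← hp1eq]; exact h1
        exact hdisj p.2 h2 this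
  have hkey : ∀ x ∈ (⋂ p ∈ (P : Set (EuclideanSpace ℝ (Fin d) × EuclideanSpace ℝ (Fin d))), f p),
      lapS Rp x = 0 := by
    intro x hx
    refine lapS_zero_of_distinct Rp β x hβpos' hzero ?_
    intro a ha b hb hab h
    have hpa : (a, b) ∈ P :=
      Finset.mem_filter.2 ⟨Finset.mem_product.2 ⟨ha, hb⟩, hab⟩
    have hx' : x ∈ f (a, b) := Set.mem_iInter₂.1 hx (a, b) hpa
    apply hx'
    show ⟪⟪b, β⟫ • a - ⟪a, β⟫ • b, x⟫ = 0
    rw [inner_sub_left, real_inner_smul_left, real_inner_smul_left]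
    have h1 : ⟪a, β⟫ ≠ 0 := ne_of_gt (hβpos' a ha)
    have h2 : ⟪b, β⟫ ≠ 0 := ne_of_gt (hβpos' b hb)
    rw [div_eq_div_iff h1 h2] at h
    linarith
  have hcont : Continuous fun x => lapS Rp x := by
    unfold lapS
    refine continuous_finset_sum _ fun a _ => continuous_finset_sum _ fun b _ => ?_
    exact continuous_const.mul
      (continuous_finset_prod _ fun γ _ => Continuous.inner continuous_const continuous_id)
  have hall : ∀ x, lapS Rp x = 0 := by
    have := Continuous.ext_on hU hcont continuous_const (fun x hx => hkey x hx)
    exact fun x => congrFun this x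
  intro x
  rw [lapl_eq Rp x]
  exact hall x
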